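/- Fix ε > 0. There exists C > 0 depending only on ε such that for every 0 < δ ≤ 1 the following holds. Let μ, f : [1,∞) → ℝ be continuous with |μ(λ) + 2/λ| ≤ δ λ⁻² and |f(λ)| ≤ δ λ^(−3−ε) for all λ ≥ 1, and let y : [1,∞) → ℝ be differentiable with y'(λ) = μ(λ) y(λ) + f(λ) for all λ ≥ 1 and |y(1)| ≤ δ. Then |y(λ)| ≤ C δ λ⁻² for all λ ≥ 1. -/

import Mathlib

open Filter Set intervalIntegral MeasureTheory

/-- ODE content of the torsion estimate `ζ ∈ O^δ(λ⁻²)` in Lemma 4.6. -/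
theorem penrose_torsion_decay (ε : ℝ) (hε : 0 < ε) :
    ∃ C > (0:ℝ), ∀ δ : ℝ, 0 < δ → δ ≤ 1 →
    ∀ μ f y : ℝ → ℝ,
      ContinuousOn μ (Set.Ici 1) → ContinuousOn f (Set.Ici 1) →
      (∀ l ≥ (1:ℝ), |μ l + 2 / l| ≤ δ * (l ^ 2)⁻¹) →
      (∀ l ≥ (1:ℝ), |f l| ≤ δ * l ^ (-3 - ε)) →
      (∀ l ≥ (1:ℝ), HasDerivAt y (μ l * y l + f l) l) →
      |y 1| ≤ δ →
      ∀ l ≥ (1:ℝ), |y l| ≤ C * δ * (l ^ 2)⁻¹ := by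
  refine ⟨Real.exp 1 * (1 + Real.exp 1 / ε), by positivity, ?_⟩
  intro δ hδ hδ1 μ f y hμc hfc hμ hf hy hy1 l hl
  set a : ℝ → ℝ := fun s => μ s + 2 / s with ha_def
  have hac : ContinuousOn a (Ici 1) := by
    apply hμc.add
    apply ContinuousOn.div continuousOn_const continuousOn_id
    intro x hx; exact ne_of_gt (lt_of_lt_of_le one_pos hx)
  set A : ℝ → ℝ := fun s => ∫ t in (1:ℝ)..s, a t with hA_def
  have haint : ∀ x ≥ (1:ℝ), IntervalIntegrable a volume 1 x := by
    intro x hx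
    apply (hac.mono ?_).intervalIntegrable
    rw [uIcc_of_le hx]; exact Icc_subset_Ici_self
  -- bound on |A x|
  have hAbound : ∀ x ≥ (1:ℝ), |A x| ≤ δ := by
    intro x hx
    have h1 : |A x| ≤ ∫ t in (1:ℝ)..x, |a t| :=
      intervalIntegral.abs_integral_le_integral_abs hx
    have h2 : (∫ t in (1:ℝ)..x, |a t|) ≤ ∫ t in (1:ℝ)..x, δ * t ^ (-2:ℝ) := by
      apply intervalIntegral.integral_mono_on hx
      · exact ((hac.mono (by rw [uIcc_of_le hx] at *; exact Icc_subset_Ici_self)).abs).intervalIntegrable.mono_set (by rw [uIcc_of_le hx])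
      · apply ContinuousOn.intervalIntegrable
        apply ContinuousOn.mul continuousOn_const
        apply ContinuousOn.rpow_const continuousOn_id
        intro t ht; left
        rw [uIcc_of_le hx] at ht
        exact ne_of_gt (lt_of_lt_of_le one_pos ht.1)
      · intro t ht
        have ht1 : (1:ℝ) ≤ t := ht.1
        have ht0 : (0:ℝ) < t := lt_of_lt_of_le one_pos ht1
        have := hμ t ht1
        have heq : (t ^ 2 : ℝ)⁻¹ = t ^ (-2:ℝ) := by
          rw [← Real.rpow_natCast t 2, ← Real.rpow_neg ht0.le]; norm_num
        calc |a t| ≤ δ * (t ^ 2)⁻¹ := this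
        _ = δ * t ^ (-2:ℝ) := by rw [heq]
    have h3 : (∫ t in (1:ℝ)..x, δ * t ^ (-2:ℝ)) = δ * (1 - x⁻¹) := by
      rw [intervalIntegral.integral_const_mul, integral_rpow]
      · have h5 : (-2:ℝ) + 1 = -1 := by norm_num
        rw [h5, Real.one_rpow, Real.rpow_neg_one]
        ring
      · right
        constructor
        · norm_num
        · rw [uIcc_of_le hx]; intro h; exact absurd h.1 (by norm_num)
    have hx0 : (0:ℝ) < x := lt_of_lt_of_le one_pos hx
    have h4 : δ * (1 - x⁻¹) ≤ δ := by
      nlinarith [inv_pos.mpr hx0, mul_pos hδ (inv_pos.mpr hx0)]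
    linarith
  have hA1 : A 1 = 0 := by simp [hA_def]
  -- z and g
  set z : ℝ → ℝ := fun s => s ^ 2 * y s with hz_def
  set g : ℝ → ℝ := fun s => z s * Real.exp (-A s) with hg_def
  -- derivative of A within Ici x for x ≥ 1
  have hA' : ∀ x ≥ (1:ℝ), HasDerivWithinAt A (a x) (Ici x) x := by
    intro x hx
    apply intervalIntegral.integral_hasDerivWithinAt_right (haint x hx)
      (t := Set.Ioi x)
    · exact ⟨Ici x, mem_of_superset self_mem_nhdsWithin Ioi_subset_Ici_self,
        ((hac.mono (Ici_subset_Ici.mpr hx)).aestronglyMeasurable measurableSet_Ici)⟩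
    · exact ((hac x hx).mono (Ici_subset_Ici.mpr hx)).mono Ioi_subset_Ici_self
  -- derivative of z
  have hz' : ∀ x ≥ (1:ℝ), HasDerivAt z (a x * z x + x ^ 2 * f x) x := by
    intro x hx
    have hx0 : x ≠ 0 := ne_of_gt (lt_of_lt_of_le one_pos hx)
    have h1 : HasDerivAt (fun s : ℝ => s ^ 2) (2 * x) x := by
      simpa using (hasDerivAt_pow 2 x)
    have h2 : HasDerivAt (fun s => s ^ 2 * y s) (2 * x * y x + x ^ 2 * (μ x * y x + f x)) x :=
      h1.mul (hy x hx)
    convert h2 using 1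
    simp only [hz_def, ha_def]
    field_simp
    ring
  -- derivative of g within Ici x
  have hg' : ∀ x ≥ (1:ℝ), HasDerivWithinAt g
      (x ^ 2 * f x * Real.exp (-A x)) (Ici x) x := by
    intro x hx
    have h1 : HasDerivWithinAt (fun s => Real.exp (-A s))
        (Real.exp (-A x) * (-(a x))) (Ici x) x :=
      ((hA' x hx).neg).exp
    have h2 : HasDerivWithinAt (fun s => z s * Real.exp (-A s))
        ((a x * z x + x ^ 2 * f x) * Real.exp (-A x) + z x * (Real.exp (-A x) * -a x)) (Ici x) x :=
      ((hz' x hx).hasDerivWithinAt (s := Ici x)).mul h1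
    convert h2 using 1
    ring
  -- the barrier
  set B : ℝ → ℝ := fun s => δ * (1 + Real.exp 1 / ε) - Real.exp 1 * δ / ε * s ^ (-ε)
    with hB_def
  set B' : ℝ → ℝ := fun s => Real.exp 1 * δ * s ^ (-ε - 1) with hB'_def
  have hB' : ∀ x ≥ (1:ℝ), HasDerivAt B (B' x) x := by
    intro x hx
    have hx0 : x ≠ 0 := ne_of_gt (lt_of_lt_of_le one_pos hx)
    have h1 : HasDerivAt (fun s : ℝ => s ^ (-ε)) (-ε * x ^ (-ε - 1)) x :=
      Real.hasDerivAt_rpow_const (Or.inl hx0)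
    have h2 : HasDerivAt (fun s => δ * (1 + Real.exp 1 / ε) - Real.exp 1 * δ / ε * s ^ (-ε))
        (-(Real.exp 1 * δ / ε * (-ε * x ^ (-ε - 1)))) x := ((h1.const_mul (Real.exp 1 * δ / ε)).const_sub (δ * (1 + Real.exp 1 / ε)))
    convert h2 using 1
    field_simp [hB'_def]
    ring
  -- conclusion via the fencing theorem on [1, l]
  have key : ∀ x ∈ Icc (1:ℝ) l, |g x| ≤ B x := by
    refine image_norm_le_of_norm_deriv_right_le_deriv_boundary'
      (f' := fun x => x ^ 2 * f x * Real.exp (-A x)) (B' := B') ?_ ?_ ?_ ?_ ?_ ?_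
    · -- continuity of g on [1, l]
      apply ContinuousOn.mul
      · apply ContinuousOn.mul (continuous_pow 2).continuousOn
        intro x hx
        exact ((hy x hx.1).continuousAt).continuousWithinAt
      · apply Real.continuous_exp.comp_continuousOn
        apply ContinuousOn.neg
        have := continuousOn_primitive_interval' (f := a) (μ := volume)
          (haint l hl) (by rw [uIcc_of_le hl]; exact left_mem_Icc.mpr hl)
        rw [uIcc_of_le hl] at this
        exact this
    · intro x hx; exact hg' x hx.1
    · -- |g 1| ≤ B 1
      have : g 1 = y 1 := by simp [hg_def, hz_def, hA1]
      rw [Real.norm_eq_abs, this, hB_def]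
      simp only []
      rw [Real.one_rpow]
      have : δ * (1 + Real.exp 1 / ε) - Real.exp 1 * δ / ε * 1 = δ := by ring
      rw [this]; exact hy1
    · -- continuity of B
      intro x hx
      exact (hB' x hx.1).continuousAt.continuousWithinAt
    · intro x hx
      exact (hB' x hx.1).hasDerivWithinAt
    · -- the derivative bound
      intro x hx
      have hx1 : (1:ℝ) ≤ x := hx.1
      have hx0 : (0:ℝ) < x := lt_of_lt_of_le one_pos hx1
      rw [Real.norm_eq_abs, abs_mul, abs_mul]
      have hA : Real.exp (-A x) ≤ Real.exp 1 := by
        apply Real.exp_le_exp.mpr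
        have := hAbound x hx1
        have := abs_le.mp this
        linarith
      have hfx := hf x hx1
      have hx2 : |x ^ 2| = x ^ 2 := abs_of_nonneg (by positivity)
      have hAe : |Real.exp (-A x)| = Real.exp (-A x) := abs_of_pos (Real.exp_pos _)
      rw [hx2, hAe]
      calc x ^ 2 * |f x| * Real.exp (-A x)
          ≤ x ^ 2 * (δ * x ^ (-3 - ε)) * Real.exp 1 := by
            apply mul_le_mul ?_ hA (Real.exp_pos _).le (by positivity)
            exact mul_le_mul_of_nonneg_left hfx (by positivity)
        _ = Real.exp 1 * δ * (x ^ (2:ℝ) * x ^ (-3 - ε)) := by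
            rw [← Real.rpow_natCast x 2]; push_cast; ring
        _ = Real.exp 1 * δ * x ^ (-ε - 1) := by
            rw [← Real.rpow_add hx0]; ring_nf
        _ = B' x := rfl
  -- unwind
  have hgl := key l (right_mem_Icc.mpr hl)
  have hl0 : (0:ℝ) < l := lt_of_lt_of_le one_pos hl
  have hBl : B l ≤ δ * (1 + Real.exp 1 / ε) := by
    have : 0 ≤ Real.exp 1 * δ / ε * l ^ (-ε) := by positivity
    simp only [hB_def]; linarith
  have hyl : y l = g l * Real.exp (A l) * (l ^ 2)⁻¹ := by
    simp only [hg_def, hz_def]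
    have he : Real.exp (-A l) * Real.exp (A l) = 1 := by
      rw [← Real.exp_add]; simp
    have h2 : (l ^ 2 : ℝ) * (l ^ 2)⁻¹ = 1 := mul_inv_cancel₀ (by positivity)
    linear_combination (-(y l * l ^ 2 * (l ^ 2)⁻¹)) * he + (-(y l)) * h2
  rw [hyl, abs_mul, abs_mul]
  have hAl : |Real.exp (A l)| ≤ Real.exp 1 := by
    rw [abs_of_pos (Real.exp_pos _)]
    apply Real.exp_le_exp.mpr
    have := abs_le.mp (hAbound l hl)
    linarith
  have h1 : |g l| * |Real.exp (A l)| ≤ (δ * (1 + Real.exp 1 / ε)) * Real.exp 1 := by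
    apply mul_le_mul (le_trans hgl hBl) hAl (abs_nonneg _) (by positivity)
  have h2 : |(l ^ 2 : ℝ)⁻¹| = (l ^ 2)⁻¹ := abs_of_pos (by positivity)
  rw [h2]
  calc |g l| * |Real.exp (A l)| * (l ^ 2)⁻¹
      ≤ (δ * (1 + Real.exp 1 / ε)) * Real.exp 1 * (l ^ 2)⁻¹ := by
        apply mul_le_mul_of_nonneg_right h1 (by positivity)
    _ = Real.exp 1 * (1 + Real.exp 1 / ε) * δ * (l ^ 2)⁻¹ := by ring
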